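/- arXiv:2410.11136 — 2 statements merged into one kernel-verified Lean document; each statement's English description precedes it below -/
import Mathlib

section
/- There exists an absolute constant c > 0 such that the following holds. Let H be a real Hilbert space, n ≥ 2 an integer, 0 < δ ≤ 1, and let P_1, …, P_n be orthogonal projections on H. If for every permutation σ of {1, …, n} one has ‖P_{σ(n)} P_{σ(n−1)} ⋯ P_{σ(1)}‖ ≤ 1 − δ, then ‖(1/n) Σ_{i=1}^n P_i‖ ≤ 1 − c (δ / (n log(n/δ)))². -/
open scoped RealInnerProductSpace

universe u

/-- A bounded operator on a real Hilbert space is an orthogonal projection if it is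
self-adjoint and idempotent. -/
def IsOrthProj {H : Type u} [NormedAddCommGroup H] [InnerProductSpace ℝ H]
    (P : H →L[ℝ] H) : Prop :=
  (∀ x y : H, ⟪P x, y⟫ = ⟪x, P y⟫) ∧ ∀ x : H, P (P x) = P x

private lemma list_prod_contraction {H : Type u} [NormedAddCommGroup H]
    [InnerProductSpace ℝ H] (L : List (H →L[ℝ] H))
    (hL : ∀ T ∈ L, ∀ y : H, ‖T y‖ ≤ ‖y‖) (y : H) :
    ‖L.prod y‖ ≤ ‖y‖ := by
  induction L generalizing y with
  | nil => simp
  | cons T L ih =>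
    rw [List.prod_cons, ContinuousLinearMap.mul_apply]
    exact le_trans (hL T List.mem_cons_self _)
      (ih (fun S hS => hL S (List.mem_cons_of_mem _ hS)) y)

private lemma norm_sub_list_prod_le {H : Type u} [NormedAddCommGroup H]
    [InnerProductSpace ℝ H] (L : List (H →L[ℝ] H))
    (hL : ∀ T ∈ L, ∀ y : H, ‖T y‖ ≤ ‖y‖) (x : H) :
    ‖x - L.reverse.prod x‖ ≤ (L.map fun T => ‖x - T x‖).sum := by
  induction L with
  | nil => simp
  | cons T L ih =>
    have hL' : ∀ S ∈ L, ∀ y : H, ‖S y‖ ≤ ‖y‖ :=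
      fun S hS => hL S (List.mem_cons_of_mem _ hS)
    rw [List.reverse_cons, List.prod_append, List.prod_singleton,
      ContinuousLinearMap.mul_apply, List.map_cons, List.sum_cons]
    have e : x - L.reverse.prod (T x)
        = (x - L.reverse.prod x) + L.reverse.prod (x - T x) := by
      rw [map_sub]; abel
    rw [e]
    calc ‖(x - L.reverse.prod x) + L.reverse.prod (x - T x)‖
        ≤ ‖x - L.reverse.prod x‖ + ‖L.reverse.prod (x - T x)‖ := norm_add_le _ _
      _ ≤ (L.map fun T => ‖x - T x‖).sum + ‖x - T x‖ :=
          add_le_add (ih hL')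
            (list_prod_contraction L.reverse
              (fun S hS => hL' S (List.mem_reverse.mp hS)) _)
      _ = ‖x - T x‖ + (L.map fun T => ‖x - T x‖).sum := add_comm _ _

/-- There is an absolute constant `c > 0` such that if all systematic scans of a family
of orthogonal projections `P_1, …, P_n` (`n ≥ 2`) satisfy
`‖P_{σ(n)} ⋯ P_{σ(1)}‖ ≤ 1 - δ` (`0 < δ ≤ 1`), then
`‖(1/n) ∑ P_i‖ ≤ 1 - c (δ / (n log(n/δ)))²`. -/
theorem glauber_gap_of_all_scan_gaps :
    ∃ c : ℝ, 0 < c ∧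
      ∀ (H : Type u) [NormedAddCommGroup H] [InnerProductSpace ℝ H] [CompleteSpace H]
        (n : ℕ), 2 ≤ n →
        ∀ (δ : ℝ), 0 < δ → δ ≤ 1 →
        ∀ (P : Fin n → H →L[ℝ] H), (∀ j, IsOrthProj (P j)) →
        (∀ σ : Equiv.Perm (Fin n),
          ‖((List.ofFn fun j => P (σ j)).reverse).prod‖ ≤ 1 - δ) →
        ‖(n : ℝ)⁻¹ • ∑ j, P j‖ ≤ 1 - c * (δ / (n * Real.log (n / δ))) ^ 2 := by
  have hlog2 : (0:ℝ) < Real.log 2 := Real.log_pos (by norm_num)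
  refine ⟨(Real.log 2) ^ 2 / 2, by positivity, ?_⟩
  intro H _ _ _ n hn δ hδ0 hδ1 P hP hscan
  have hn2 : (2:ℝ) ≤ (n:ℝ) := by exact_mod_cast hn
  have hn0 : (0:ℝ) < n := by linarith
  -- contraction property of each projection
  have hcontr : ∀ (j : Fin n) (y : H), ‖P j y‖ ≤ ‖y‖ := by
    intro j y
    have h1 : ‖P j y‖ ^ 2 = ⟪y, P j y⟫ := by
      rw [← real_inner_self_eq_norm_sq, (hP j).1, (hP j).2]
    have h2 := real_inner_le_norm y (P j y)
    nlinarith [norm_nonneg (P j y), norm_nonneg y]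
  -- key spectral bound
  have key : ‖(n : ℝ)⁻¹ • ∑ j, P j‖ ≤ 1 - δ ^ 2 / (2 * (n:ℝ) ^ 2) := by
    have hM0 : (0:ℝ) ≤ 1 - δ ^ 2 / (2 * (n:ℝ) ^ 2) := by
      have h1 : δ ^ 2 / (2 * (n:ℝ) ^ 2) ≤ 1 := by
        rw [div_le_one (by positivity)]
        nlinarith
      linarith
    refine ContinuousLinearMap.opNorm_le_of_unit_norm hM0 ?_
    intro x hx
    -- Pythagoras for each projection
    have hs : ∀ j, ‖x - P j x‖ ^ 2 = 1 - ‖P j x‖ ^ 2 := by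
      intro j
      have hip : ⟪P j x, P j x⟫ = ⟪x, P j x⟫ := by rw [(hP j).1, (hP j).2]
      have h2 : ⟪x, P j x⟫ = ‖P j x‖ ^ 2 := by rw [← hip, real_inner_self_eq_norm_sq]
      rw [norm_sub_sq_real, hx, h2]; ring
    -- the scan for the identity permutation
    set L : List (H →L[ℝ] H) := List.ofFn fun j => P j with hLdef
    have hmem : ∀ T ∈ L, ∀ y : H, ‖T y‖ ≤ ‖y‖ := by
      intro T hT
      rw [hLdef, List.mem_ofFn] at hT
      obtain ⟨j, rfl⟩ := hT
      exact hcontr j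
    have hQ : ‖L.reverse.prod‖ ≤ 1 - δ := by
      have := hscan (Equiv.refl (Fin n))
      simpa using this
    have h1 : ‖x - L.reverse.prod x‖ ≤ ∑ j, ‖x - P j x‖ := by
      have h := norm_sub_list_prod_le L hmem x
      rwa [hLdef, List.map_ofFn, List.sum_ofFn, Function.comp_def] at h
    have h2 : ‖L.reverse.prod x‖ ≤ 1 - δ := by
      calc ‖L.reverse.prod x‖ ≤ ‖L.reverse.prod‖ * ‖x‖ := (L.reverse.prod).le_opNorm x
        _ = ‖L.reverse.prod‖ := by rw [hx, mul_one]
        _ ≤ 1 - δ := hQ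
    have hδsum : δ ≤ ∑ j, ‖x - P j x‖ := by
      have h3 : ‖x‖ - ‖L.reverse.prod x‖ ≤ ‖x - L.reverse.prod x‖ := norm_sub_norm_le _ _
      rw [hx] at h3
      linarith
    -- Cauchy-Schwarz for the sum
    have hCS : δ ^ 2 ≤ (n:ℝ) * ∑ j, ‖x - P j x‖ ^ 2 := by
      have h4 := sq_sum_le_card_mul_sum_sq (s := Finset.univ)
        (f := fun j : Fin n => ‖x - P j x‖)
      simp only [Finset.card_univ, Fintype.card_fin] at h4
      have h5 : δ ^ 2 ≤ (∑ j, ‖x - P j x‖) ^ 2 := by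
        have := pow_le_pow_left₀ hδ0.le hδsum 2
        simpa using this
      exact h5.trans h4
    -- pointwise bound on each ‖P j x‖
    have hPb : ∀ j, ‖P j x‖ ≤ 1 - ‖x - P j x‖ ^ 2 / 2 := by
      intro j
      have h6 : ‖P j x‖ ^ 2 = 1 - ‖x - P j x‖ ^ 2 := by have := hs j; linarith
      have h7 : ‖x - P j x‖ ^ 2 ≤ 1 := by nlinarith [sq_nonneg ‖P j x‖]
      have hb0 : (0:ℝ) ≤ 1 - ‖x - P j x‖ ^ 2 / 2 := by linarith
      have hsq : ‖P j x‖ ^ 2 ≤ (1 - ‖x - P j x‖ ^ 2 / 2) ^ 2 := by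
        nlinarith [sq_nonneg (‖x - P j x‖ ^ 2)]
      exact (pow_le_pow_iff_left₀ (norm_nonneg _) hb0 two_ne_zero).mp hsq
    -- assemble
    set S : ℝ := ∑ j, ‖x - P j x‖ ^ 2 with hSdef
    have hsumP : ‖((n : ℝ)⁻¹ • ∑ j, P j) x‖ ≤ (n:ℝ)⁻¹ * ((n:ℝ) - S / 2) := by
      rw [ContinuousLinearMap.smul_apply, norm_smul, ContinuousLinearMap.sum_apply]
      have h8 : ‖∑ j, P j x‖ ≤ (n:ℝ) - S / 2 := by
        calc ‖∑ j, P j x‖ ≤ ∑ j, ‖P j x‖ := norm_sum_le _ _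
          _ ≤ ∑ j : Fin n, (1 - ‖x - P j x‖ ^ 2 / 2) :=
              Finset.sum_le_sum fun j _ => hPb j
          _ = (n:ℝ) - S / 2 := by
              rw [Finset.sum_sub_distrib, Finset.sum_const, Finset.card_univ,
                Fintype.card_fin, hSdef, ← Finset.sum_div]
              simp
      have h9 : ‖(n:ℝ)⁻¹‖ = (n:ℝ)⁻¹ := by
        rw [Real.norm_eq_abs, abs_of_pos (by positivity)]
      rw [h9]
      exact mul_le_mul_of_nonneg_left h8 (by positivity)
    have h10 : (n:ℝ)⁻¹ * ((n:ℝ) - S / 2) ≤ 1 - δ ^ 2 / (2 * (n:ℝ) ^ 2) := by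
      have h11 : δ ^ 2 / (2 * (n:ℝ) ^ 2) ≤ S / (2 * (n:ℝ)) := by
        rw [div_le_div_iff₀ (by positivity) (by positivity)]
        nlinarith [mul_le_mul_of_nonneg_left hCS (le_of_lt hn0)]
      have h12 : (n:ℝ)⁻¹ * ((n:ℝ) - S / 2) = 1 - S / (2 * (n:ℝ)) := by
        field_simp
      rw [h12]
      linarith
    exact hsumP.trans h10
  -- final arithmetic comparison
  have hL2 : Real.log 2 ≤ Real.log ((n:ℝ) / δ) := by
    apply Real.log_le_log (by norm_num)
    rw [le_div_iff₀ hδ0]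
    nlinarith
  have hL0 : (0:ℝ) < Real.log ((n:ℝ) / δ) := lt_of_lt_of_le hlog2 hL2
  set Lg : ℝ := Real.log ((n:ℝ) / δ) with hLgdef
  have harith : (Real.log 2) ^ 2 / 2 * (δ / ((n:ℝ) * Lg)) ^ 2
      ≤ δ ^ 2 / (2 * (n:ℝ) ^ 2) := by
    have hsq : (Real.log 2) ^ 2 ≤ Lg ^ 2 := pow_le_pow_left₀ hlog2.le hL2 2
    have e : (δ / ((n:ℝ) * Lg)) ^ 2 = δ ^ 2 / ((n:ℝ) ^ 2 * Lg ^ 2) := by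
      rw [div_pow, mul_pow]
    rw [e, div_mul_div_comm, div_le_div_iff₀ (by positivity) (by positivity)]
    nlinarith [mul_le_mul_of_nonneg_left hsq
      (by positivity : (0:ℝ) ≤ 2 * (n:ℝ) ^ 2 * δ ^ 2)]
  linarith
end

section
/- There exists an absolute constant c > 0 such that the following holds. Let H be a real Hilbert space, n ≥ 2 an integer, 0 < δ ≤ 1, and let P_1, …, P_n be orthogonal projections on H. If there exists a permutation σ of {1, …, n} such that ‖P_{σ(n)} P_{σ(n−1)} ⋯ P_{σ(1)}‖ ≤ 1 − δ, then ‖(1/n) Σ_{i=1}^n P_i‖ ≤ 1 − c (δ / (n² log(n/δ)))². -/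
open scoped RealInnerProductSpace

universe u

section Aux

variable {H : Type u} [NormedAddCommGroup H] [InnerProductSpace ℝ H]

lemma IsOrthProj.inner_self {P : H →L[ℝ] H} (hP : IsOrthProj P) (x : H) :
    ⟪P x, x⟫ = ‖P x‖ ^ 2 := by
  have h1 : ⟪P x, P x⟫ = ⟪x, P (P x)⟫ := hP.1 x (P x)
  rw [hP.2 x] at h1
  have h2 : ⟪x, P x⟫ = ⟪P x, x⟫ := real_inner_comm _ _
  rw [← real_inner_self_eq_norm_sq, h1, h2]

lemma IsOrthProj.norm_apply_le {P : H →L[ℝ] H} (hP : IsOrthProj P) (x : H) :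
    ‖P x‖ ≤ ‖x‖ := by
  have h := hP.inner_self x
  have hcs : ⟪P x, x⟫ ≤ ‖P x‖ * ‖x‖ := real_inner_le_norm _ _
  rcases eq_or_lt_of_le (norm_nonneg (P x)) with h0 | h0
  · rw [← h0]; exact norm_nonneg x
  · have : ‖P x‖ ^ 2 ≤ ‖P x‖ * ‖x‖ := h ▸ hcs
    nlinarith

lemma IsOrthProj.opNorm_le_one {P : H →L[ℝ] H} (hP : IsOrthProj P) : ‖P‖ ≤ 1 := by
  refine ContinuousLinearMap.opNorm_le_bound _ zero_le_one fun x => ?_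
  simpa using hP.norm_apply_le x

lemma IsOrthProj.norm_sub_sq {P : H →L[ℝ] H} (hP : IsOrthProj P) (x : H) :
    ‖P x - x‖ ^ 2 = ‖x‖ ^ 2 - ‖P x‖ ^ 2 := by
  have h := hP.inner_self x
  have := norm_sub_sq_real (P x) x
  rw [h] at this
  linarith [this]

/-- Telescoping bound for products of norm-≤1 operators. -/
lemma list_prod_sub_le (x : H) :
    ∀ L : List (H →L[ℝ] H), (∀ Q ∈ L, ‖Q‖ ≤ 1) →
      ‖L.prod x - x‖ ≤ (L.map fun Q => ‖Q x - x‖).sum := by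
  intro L
  induction L with
  | nil => simp
  | cons Q L ih =>
    intro hL
    have hQ : ‖Q‖ ≤ 1 := hL Q List.mem_cons_self
    have hL' : ∀ R ∈ L, ‖R‖ ≤ 1 := fun R hR => hL R (List.mem_cons_of_mem _ hR)
    have h1 : ‖Q (L.prod x) - Q x‖ ≤ ‖L.prod x - x‖ := by
      calc ‖Q (L.prod x) - Q x‖ = ‖Q (L.prod x - x)‖ := by rw [map_sub]
        _ ≤ ‖Q‖ * ‖L.prod x - x‖ := Q.le_opNorm _
        _ ≤ 1 * ‖L.prod x - x‖ := by
            exact mul_le_mul_of_nonneg_right hQ (norm_nonneg _)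
        _ = ‖L.prod x - x‖ := one_mul _
    have key : ‖(Q :: L).prod x - x‖ ≤ ‖L.prod x - x‖ + ‖Q x - x‖ := by
      have : (Q :: L).prod x = Q (L.prod x) := by
        simp [List.prod_cons, ContinuousLinearMap.mul_apply]
      rw [this]
      calc ‖Q (L.prod x) - x‖
          ≤ ‖Q (L.prod x) - Q x‖ + ‖Q x - x‖ := by
            have := norm_sub_le_norm_sub_add_norm_sub (Q (L.prod x)) (Q x) x
            exact this
        _ ≤ ‖L.prod x - x‖ + ‖Q x - x‖ := by linarith
    calc ‖(Q :: L).prod x - x‖ ≤ ‖L.prod x - x‖ + ‖Q x - x‖ := key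
      _ ≤ (L.map fun Q => ‖Q x - x‖).sum + ‖Q x - x‖ := by linarith [ih hL']
      _ = ((Q :: L).map fun Q => ‖Q x - x‖).sum := by simp [add_comm]

lemma sq_le_one_sub_imp {r t : ℝ} (hr : 0 ≤ r) (ht : 0 ≤ t) (ht1 : t ≤ 1)
    (h : r ^ 2 ≤ 1 - t) : r ≤ 1 - t / 2 := by nlinarith [sq_nonneg t]

end Aux

set_option maxHeartbeats 1000000 in
/-- There is an absolute constant `c > 0` such that if some systematic scan of a family
of orthogonal projections `P_1, …, P_n` (`n ≥ 2`) satisfies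
`‖P_{σ(n)} ⋯ P_{σ(1)}‖ ≤ 1 - δ` (`0 < δ ≤ 1`), then
`‖(1/n) ∑ P_i‖ ≤ 1 - c (δ / (n² log(n/δ)))²`. -/
theorem glauber_gap_of_one_scan_gap :
    ∃ c : ℝ, 0 < c ∧
      ∀ (H : Type u) [NormedAddCommGroup H] [InnerProductSpace ℝ H] [CompleteSpace H]
        (n : ℕ), 2 ≤ n →
        ∀ (δ : ℝ), 0 < δ → δ ≤ 1 →
        ∀ (P : Fin n → H →L[ℝ] H), (∀ j, IsOrthProj (P j)) →
        (∃ σ : Equiv.Perm (Fin n),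
          ‖((List.ofFn fun j => P (σ j)).reverse).prod‖ ≤ 1 - δ) →
        ‖(n : ℝ)⁻¹ • ∑ j, P j‖ ≤ 1 - c * (δ / ((n : ℝ) ^ 2 * Real.log (n / δ))) ^ 2 := by
  refine ⟨1/2, by norm_num, ?_⟩
  intro H _ _ _ n hn δ hδ hδ1 P hP ⟨σ, hσ⟩
  have hn2 : (2 : ℝ) ≤ (n : ℝ) := by exact_mod_cast hn
  have hn0 : (0 : ℝ) < (n : ℝ) := by linarith
  -- Step 1: the main quantitative bound ‖A‖ ≤ 1 - δ²/(2n²)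
  have main : ‖(n : ℝ)⁻¹ • ∑ j, P j‖ ≤ 1 - δ ^ 2 / (2 * (n : ℝ) ^ 2) := by
    have hC : (0 : ℝ) ≤ 1 - δ ^ 2 / (2 * (n : ℝ) ^ 2) := by
      have : δ ^ 2 ≤ 1 := by nlinarith
      have h2n : (2 : ℝ) ≤ 2 * (n : ℝ) ^ 2 := by nlinarith
      have : δ ^ 2 / (2 * (n : ℝ) ^ 2) ≤ 1 / 2 := by
        apply div_le_div₀ (by norm_num) this (by norm_num) (by nlinarith)
      linarith
    refine ContinuousLinearMap.opNorm_le_of_unit_norm hC fun x hx => ?_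
    set L : List (H →L[ℝ] H) := (List.ofFn fun j => P (σ j)).reverse with hL
    have hmem : ∀ Q ∈ L, ‖Q‖ ≤ 1 := by
      intro Q hQ
      rw [hL, List.mem_reverse, List.mem_ofFn] at hQ
      obtain ⟨j, rfl⟩ := hQ
      exact (hP _).opNorm_le_one
    -- δ ≤ ∑ ‖P i x - x‖
    have hQx : ‖L.prod x‖ ≤ 1 - δ := by
      calc ‖L.prod x‖ ≤ ‖L.prod‖ * ‖x‖ := (L.prod).le_opNorm x
        _ = ‖L.prod‖ := by rw [hx, mul_one]
        _ ≤ 1 - δ := hσ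
    have hsum_eq : (L.map fun Q => ‖Q x - x‖).sum = ∑ i, ‖P i x - x‖ := by
      rw [hL, List.map_reverse, List.sum_reverse, List.map_ofFn, List.sum_ofFn]
      simpa [Function.comp] using Equiv.sum_comp σ fun i => ‖P i x - x‖
    have hδsum : δ ≤ ∑ i, ‖P i x - x‖ := by
      have h1 : ‖L.prod x - x‖ ≤ (L.map fun Q => ‖Q x - x‖).sum :=
        list_prod_sub_le x L hmem
      have h2 : δ ≤ ‖L.prod x - x‖ := by
        have := norm_sub_norm_le (L.prod x) x
        have h3 : ‖x‖ - ‖L.prod x‖ ≤ ‖L.prod x - x‖ := by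
          have := norm_sub_norm_le x (L.prod x)
          rw [norm_sub_rev] at this
          linarith
        rw [hx] at h3
        linarith
      rw [hsum_eq] at h1
      linarith
    -- Cauchy-Schwarz: δ² ≤ n * ∑ ‖P i x - x‖²
    have hcs1 : (∑ i, ‖P i x - x‖) ^ 2 ≤ (n : ℝ) * ∑ i, ‖P i x - x‖ ^ 2 := by
      have := sq_sum_le_card_mul_sum_sq (s := (Finset.univ : Finset (Fin n)))
        (f := fun i => ‖P i x - x‖)
      simpa using this
    have hsub : ∀ i, ‖P i x - x‖ ^ 2 = 1 - ‖P i x‖ ^ 2 := by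
      intro i
      rw [(hP i).norm_sub_sq x, hx]; ring
    have hδ2 : δ ^ 2 ≤ (n : ℝ) ^ 2 - (n : ℝ) * ∑ i, ‖P i x‖ ^ 2 := by
      have h1 : δ ^ 2 ≤ (∑ i, ‖P i x - x‖) ^ 2 := by
        have hs : (0:ℝ) ≤ ∑ i, ‖P i x - x‖ :=
          Finset.sum_nonneg fun i _ => norm_nonneg _
        nlinarith
      have h2 : ∑ i, ‖P i x - x‖ ^ 2 = (n : ℝ) - ∑ i, ‖P i x‖ ^ 2 := by
        simp only [hsub, Finset.sum_sub_distrib]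
        simp
      calc δ ^ 2 ≤ (n : ℝ) * ∑ i, ‖P i x - x‖ ^ 2 := le_trans h1 hcs1
        _ = (n : ℝ) ^ 2 - (n : ℝ) * ∑ i, ‖P i x‖ ^ 2 := by rw [h2]; ring
    -- ‖A x‖² ≤ 1 - δ²/n²
    have hAx : ‖((n : ℝ)⁻¹ • ∑ j, P j) x‖ ≤ (n : ℝ)⁻¹ * ∑ i, ‖P i x‖ := by
      have : ((n : ℝ)⁻¹ • ∑ j, P j) x = (n : ℝ)⁻¹ • ∑ j, P j x := by
        simp [ContinuousLinearMap.smul_apply, ContinuousLinearMap.sum_apply]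
      rw [this, norm_smul]
      have h1 : ‖∑ j, P j x‖ ≤ ∑ i, ‖P i x‖ := norm_sum_le _ _
      have h2 : ‖(n : ℝ)⁻¹‖ = (n : ℝ)⁻¹ := by
        rw [Real.norm_eq_abs, abs_of_pos (inv_pos.mpr hn0)]
      rw [h2]
      exact mul_le_mul_of_nonneg_left h1 (inv_nonneg.mpr hn0.le)
    have hcs2 : (∑ i, ‖P i x‖) ^ 2 ≤ (n : ℝ) * ∑ i, ‖P i x‖ ^ 2 := by
      have := sq_sum_le_card_mul_sum_sq (s := (Finset.univ : Finset (Fin n)))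
        (f := fun i => ‖P i x‖)
      simpa using this
    have hAx2 : ‖((n : ℝ)⁻¹ • ∑ j, P j) x‖ ^ 2 ≤ 1 - δ ^ 2 / (n : ℝ) ^ 2 := by
      have hAnn : (0:ℝ) ≤ ‖((n : ℝ)⁻¹ • ∑ j, P j) x‖ := norm_nonneg _
      have hsumnn : (0:ℝ) ≤ ∑ i, ‖P i x‖ :=
        Finset.sum_nonneg fun i _ => norm_nonneg _
      have h1 : ‖((n : ℝ)⁻¹ • ∑ j, P j) x‖ ^ 2 ≤ ((n : ℝ)⁻¹ * ∑ i, ‖P i x‖) ^ 2 := by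
        have h1' : (0:ℝ) ≤ (n : ℝ)⁻¹ * ∑ i, ‖P i x‖ :=
          mul_nonneg (inv_nonneg.mpr hn0.le) hsumnn
        nlinarith
      have h2 : ((n : ℝ)⁻¹ * ∑ i, ‖P i x‖) ^ 2 = (n : ℝ)⁻¹ ^ 2 * (∑ i, ‖P i x‖) ^ 2 := by
        ring
      have h3 : (∑ i, ‖P i x‖)^2 ≤ (n : ℝ) * ((n : ℝ) - δ ^ 2 / (n : ℝ)) := by
        have : (n : ℝ) * ∑ i, ‖P i x‖ ^ 2 ≤ (n:ℝ) * ((n : ℝ) - δ ^ 2 / (n : ℝ)) := by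
          have hineq : ∑ i, ‖P i x‖ ^ 2 ≤ (n : ℝ) - δ ^ 2 / (n : ℝ) := by
            have hd : δ ^ 2 / (n : ℝ) ≤ (n : ℝ) - ∑ i, ‖P i x‖ ^ 2 := by
              rw [div_le_iff₀ hn0]; nlinarith
            linarith
          exact mul_le_mul_of_nonneg_left hineq hn0.le
        linarith [hcs2]
      calc ‖((n : ℝ)⁻¹ • ∑ j, P j) x‖ ^ 2
          ≤ (n : ℝ)⁻¹ ^ 2 * (∑ i, ‖P i x‖) ^ 2 := by rw [← h2]; exact h1
        _ ≤ (n : ℝ)⁻¹ ^ 2 * ((n : ℝ) * ((n : ℝ) - δ ^ 2 / (n : ℝ))) := by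
            exact mul_le_mul_of_nonneg_left h3 (by positivity)
        _ = 1 - δ ^ 2 / (n : ℝ) ^ 2 := by field_simp
    -- conclude ‖A x‖ ≤ 1 - δ²/(2n²)
    have hAnn : (0:ℝ) ≤ ‖((n : ℝ)⁻¹ • ∑ j, P j) x‖ := norm_nonneg _
    have ht1 : δ ^ 2 / (n : ℝ) ^ 2 ≤ 1 := by
      rw [div_le_one (by positivity)]; nlinarith
    have hfin := sq_le_one_sub_imp hAnn (by positivity) ht1 hAx2
    have heq : δ ^ 2 / (2 * (n : ℝ) ^ 2) = δ ^ 2 / (n : ℝ) ^ 2 / 2 := by ring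
    rw [heq]
    exact hfin
  -- Step 2: compare with the stated bound
  have hlog : Real.log 2 ≤ Real.log ((n : ℝ) / δ) := by
    apply Real.log_le_log (by norm_num)
    rw [le_div_iff₀ hδ]
    linarith
  have hlog2 : (0.6931471803 : ℝ) < Real.log 2 := Real.log_two_gt_d9
  set Lg := Real.log ((n : ℝ) / δ) with hLg
  have hLgpos : (0:ℝ) < Lg := by linarith
  have hL07 : (0.69:ℝ) ≤ Lg := by linarith
  have hnL : (2:ℝ) * 0.69 ≤ (n:ℝ) * Lg :=
    mul_le_mul hn2 hL07 (by norm_num) (by linarith)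
  have h1 : (1:ℝ) ≤ (n : ℝ) ^ 2 * Lg ^ 2 := by nlinarith [hnL]
  have h2 : (δ / ((n : ℝ) ^ 2 * Lg)) ^ 2 ≤ δ ^ 2 / (n : ℝ) ^ 2 := by
    rw [div_pow, mul_pow]
    gcongr
    all_goals first
      | positivity
      | exact sq_nonneg δ
      | nlinarith [mul_le_mul_of_nonneg_left h1 (sq_nonneg (n : ℝ))]
  have key : (1:ℝ)/2 * (δ / ((n : ℝ) ^ 2 * Lg)) ^ 2 ≤ δ ^ 2 / (2 * (n : ℝ) ^ 2) := by
    calc (1:ℝ)/2 * (δ / ((n : ℝ) ^ 2 * Lg)) ^ 2 ≤ (1:ℝ)/2 * (δ ^ 2 / (n : ℝ) ^ 2) :=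
          mul_le_mul_of_nonneg_left h2 (by norm_num)
      _ = δ ^ 2 / (2 * (n : ℝ) ^ 2) := by ring
  linarith
end
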